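/- Let q > 0, q ≠ 1, and d an integer with |d| ≥ 2. Set β = sqrt(1 − 1/[d]_q²) and let M = [[q^{−d}/[d]_q, β],[β, −q^{d}/[d]_q]], N = [[q^{d}/[d]_q, β],[β, −q^{−d}/[d]_q]]. Then the kernel of I₄ − M ⊗ N is spanned by the two vectors (1, 0, 0, 1) and ([2d]_q/([d]_q² β), 1, 1, 0). -/

import Mathlib

open Matrix Kronecker

/-- Quantum number `[d]_q` for an integer `d`. -/
noncomputable def qnumZ (q : ℝ) (d : ℤ) : ℝ := (q ^ d - q ^ (-d)) / (q - q⁻¹)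

private lemma helper (a b β c : ℝ) (hβ : 0 < β) (hβ2 : β ^ 2 = 1 - a * b)
    (hab : a + b ≠ 0) (ha : a ≠ 0) (hc : c * β = a + b) :
    LinearMap.ker (Matrix.toLin'
        ((1 : Matrix (Fin 2 × Fin 2) (Fin 2 × Fin 2) ℝ) - !![a, β; β, -b] ⊗ₖ !![b, β; β, -a]))
      = Submodule.span ℝ {(fun p => !![(1 : ℝ), 0; 0, 1] p.1 p.2),
          (fun p => !![c, (1 : ℝ); 1, 0] p.1 p.2)} := by
  have hβ0 : β ≠ 0 := hβ.ne'
  refine le_antisymm ?_ ?_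
  · intro u hu
    rw [LinearMap.mem_ker, Matrix.toLin'_apply] at hu
    have E2 := congrFun hu ((0 : Fin 2), (1 : Fin 2))
    have E3 := congrFun hu ((1 : Fin 2), (0 : Fin 2))
    simp [Matrix.mulVec, dotProduct, Fintype.sum_prod_type, Fin.sum_univ_two,
      Matrix.sub_apply, Matrix.one_apply, kroneckerMap_apply, Prod.ext_iff] at E2 E3
    have h0 : (a + b) * (u (0, 1) - u (1, 0)) = 0 := by
      linear_combination b * E2 - a * E3 + (b * u (1, 0) - a * u (0, 1)) * hβ2
    have hyz : u (0, 1) = u (1, 0) := by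
      have := (mul_eq_zero.mp h0).resolve_left hab
      linarith
    have h1 : a * β * (u 0 - u 1 - c * u (0, 1)) = 0 := by
      linear_combination (-1) * E2 + β ^ 2 * hyz - u (0, 1) * hβ2 - a * u (0, 1) * hc
    have hxw : u 0 = c * u (0, 1) + u 1 := by
      have := (mul_eq_zero.mp h1).resolve_left (mul_ne_zero ha hβ0)
      linarith
    rw [Submodule.mem_span_pair]
    refine ⟨u 1, u (0, 1), ?_⟩
    funext p
    obtain ⟨i, j⟩ := p
    fin_cases i <;> fin_cases j <;>
      simp [Prod.ext_iff] <;>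
      (simp only [show (0 : Fin 2 × Fin 2) = (0, 0) from rfl,
        show (1 : Fin 2 × Fin 2) = (1, 1) from rfl] at hxw ⊢ <;> linarith [hxw, hyz])
  · rw [Submodule.span_le]
    rintro u (rfl | rfl)
    · rw [SetLike.mem_coe, LinearMap.mem_ker, Matrix.toLin'_apply]
      funext p
      obtain ⟨i, j⟩ := p
      fin_cases i <;> fin_cases j <;>
        simp [Matrix.mulVec, dotProduct, Fintype.sum_prod_type, Fin.sum_univ_two,
          Matrix.sub_apply, Matrix.one_apply, kroneckerMap_apply, Prod.ext_iff] <;>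
        first
          | linear_combination hβ2
          | linear_combination -hβ2
          | linear_combination 2*hβ2
          | linear_combination -2*hβ2
          | ring
    · rw [SetLike.mem_coe, LinearMap.mem_ker, Matrix.toLin'_apply]
      funext p
      obtain ⟨i, j⟩ := p
      fin_cases i <;> fin_cases j <;>
        simp [Matrix.mulVec, dotProduct, Fintype.sum_prod_type, Fin.sum_univ_two,
          Matrix.sub_apply, Matrix.one_apply, kroneckerMap_apply, Prod.ext_iff] <;>
        first
          | linear_combination (-c) * hβ2 + β * hc
          | linear_combination (-1) * hβ2 - a * hc
          | linear_combination (-1) * hβ2 - b * hc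
          | linear_combination -β * hc

private lemma aux1 (r : ℝ) (hr : 1 < r) (m : ℤ) (hm : 2 ≤ m) :
    r + r⁻¹ < r ^ m + (r ^ m)⁻¹ := by
  have hr0 : 0 < r := by linarith
  have h1 : r < r ^ m := by
    calc r = r ^ (1 : ℤ) := (zpow_one r).symm
    _ < r ^ m := zpow_lt_zpow_right₀ hr (by omega)
  have hm0 : 0 < r ^ m := zpow_pos hr0 m
  have key : r ^ m + (r ^ m)⁻¹ - (r + r⁻¹)
      = (r ^ m - r) * (r * r ^ m - 1) / (r * r ^ m) := by
    field_simp
    ring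
  nlinarith [div_pos (mul_pos (sub_pos.mpr h1) (by nlinarith : (0:ℝ) < r * r ^ m - 1))
    (mul_pos hr0 hm0)]

private lemma aux2 (q : ℝ) (hq : 0 < q) (hq1 : q ≠ 1) (d : ℤ) (hd : 2 ≤ |d|) :
    q + q⁻¹ < q ^ d + q ^ (-d) := by
  rcases hq1.lt_or_gt with hlt | hgt
  · have hq' : 1 < q⁻¹ := (one_lt_inv₀ hq).mpr hlt
    rcases le_abs.mp hd with h2 | h2
    · have := aux1 q⁻¹ hq' d h2
      simp only [_root_.inv_zpow', neg_neg, inv_inv, ← _root_.zpow_neg] at this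
      linarith
    · have := aux1 q⁻¹ hq' (-d) h2
      simp only [_root_.inv_zpow', neg_neg, inv_inv, ← _root_.zpow_neg] at this
      linarith
  · rcases le_abs.mp hd with h2 | h2
    · have := aux1 q hgt d h2
      rw [← _root_.zpow_neg] at this
      linarith
    · have := aux1 q hgt (-d) h2
      rw [← _root_.zpow_neg, neg_neg] at this
      linarith

theorem kernel_identity_rule_case (q : ℝ) (hq : 0 < q) (hq1 : q ≠ 1)
    (d : ℤ) (hd : 2 ≤ |d|) :
    let β : ℝ := Real.sqrt (1 - 1 / (qnumZ q d) ^ 2)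
    let M : Matrix (Fin 2) (Fin 2) ℝ :=
      !![q ^ (-d) / qnumZ q d, β; β, -(q ^ d) / qnumZ q d]
    let N : Matrix (Fin 2) (Fin 2) ℝ :=
      !![q ^ d / qnumZ q d, β; β, -(q ^ (-d)) / qnumZ q d]
    let c : ℝ := qnumZ q (2 * d) / ((qnumZ q d) ^ 2 * β)
    let v₁ : Fin 2 × Fin 2 → ℝ := fun p => !![(1 : ℝ), 0; 0, 1] p.1 p.2
    let v₂ : Fin 2 × Fin 2 → ℝ := fun p => !![c, (1 : ℝ); 1, 0] p.1 p.2
    LinearMap.ker (Matrix.toLin'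
        ((1 : Matrix (Fin 2 × Fin 2) (Fin 2 × Fin 2) ℝ) - M ⊗ₖ N))
      = Submodule.span ℝ {v₁, v₂} := by
  have hq0 : q ≠ 0 := hq.ne'
  have hqd1 : q ^ d * q ^ (-d) = 1 := by
    rw [← zpow_add₀ hq0]
    simp
  have hsum := aux2 q hq hq1 d hd
  set D := qnumZ q d with hDdef
  have hD2 : 1 < D ^ 2 := by
    rw [hDdef]
    unfold qnumZ
    have he2 : (0:ℝ) < (q - q⁻¹) ^ 2 := by
      have he : q - q⁻¹ ≠ 0 := by
        intro h
        apply hq1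
        have hq2 : (q - 1) * (q + 1) = 0 := by
          have : q * q - 1 = 0 := by
            field_simp at h
            linarith [h]
          nlinarith [this]
        rcases mul_eq_zero.mp hq2 with h' | h'
        · linarith
        · linarith
      positivity
    rw [div_pow, lt_div_iff₀ he2]
    nlinarith [mul_pos (sub_pos.mpr hsum)
      (by positivity : (0:ℝ) < q ^ d + q ^ (-d) + (q + q⁻¹)),
      hqd1, mul_inv_cancel₀ hq0]
  have hD : D ≠ 0 := by
    intro h
    rw [h] at hD2
    norm_num at hD2
  have hb2pos : 0 < 1 - 1 / D ^ 2 := by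
    have hDp : (0:ℝ) < D ^ 2 := by linarith
    have : 1 / D ^ 2 < 1 := by rw [div_lt_one hDp]; exact hD2
    linarith
  intro β M N c v₁ v₂
  have hβpos : 0 < β := Real.sqrt_pos.mpr hb2pos
  have hβ2 : β ^ 2 = 1 - 1 / D ^ 2 := Real.sq_sqrt hb2pos.le
  have h2d : qnumZ q (2 * d) = (q ^ d + q ^ (-d)) * D := by
    rw [hDdef]
    unfold qnumZ
    have h1 : q ^ (2 * d) = q ^ d * q ^ d := by rw [two_mul, zpow_add₀ hq0]
    have h2 : q ^ (-(2 * d)) = q ^ (-d) * q ^ (-d) := by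
      rw [show -(2 * d) = -d + -d by ring, zpow_add₀ hq0]
    rw [h1, h2, ← mul_div_assoc]
    congr 1
    ring
  have hc' : c * β = q ^ (-d) / D + q ^ d / D := by
    show (qnumZ q (2 * d) / (D ^ 2 * β)) * β = _
    rw [h2d]
    field_simp
    ring
  have hβ2' : β ^ 2 = 1 - (q ^ (-d) / D) * (q ^ d / D) := by
    rw [hβ2]
    congr 1
    rw [div_mul_div_comm, mul_comm (q ^ (-d)) (q ^ d), hqd1, ← pow_two]
  have hab' : q ^ (-d) / D + q ^ d / D ≠ 0 := by
    rw [← add_div]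
    exact div_ne_zero (by positivity) hD
  have ha' : q ^ (-d) / D ≠ 0 := div_ne_zero (by positivity) hD
  have key := helper (q ^ (-d) / D) (q ^ d / D) β c hβpos hβ2' hab' ha' hc'
  rw [show -(q ^ d / D) = -(q ^ d) / D by ring,
    show -(q ^ (-d) / D) = -(q ^ (-d)) / D by ring] at key
  exact key
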